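/- Let ω be a real number with 0 ≤ ω < 1. Then the sequence n! / n^{⌊n^ω⌋} tends to +∞ as n → ∞; that is, when the number of tree leaves grows like B(n) = n^ω with 0 ≤ ω < 1, the factor n!/n^{B(n)} appearing in the expected D-optimality criterion diverges to infinity. -/

import Mathlib

open Filter

/-- For `0 ≤ ω < 1`, the sequence `n! / n ^ ⌊n^ω⌋` tends to `+∞`:
when the number of leaves grows like `B(n) = n^ω` with `ω < 1`, the factor `n!/n^{B(n)}`
in the expected D-optimality criterion diverges. -/
theorem stmt18 (ω : ℝ) (hω0 : 0 ≤ ω) (hω1 : ω < 1) :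
    Tendsto (fun n : ℕ => (n.factorial : ℝ) / (n : ℝ) ^ ⌊(n : ℝ) ^ ω⌋₊) atTop atTop := by
  have hc2 : (0:ℝ) ≤ Real.log 2 := Real.log_nonneg (by norm_num)
  -- the lower bound sequence tends to atTop
  have hexp : Tendsto (fun m : ℕ =>
      Real.exp ((m / 4 : ℝ) * (Real.log m - 4 * Real.log 2))) atTop atTop := by
    apply Real.tendsto_exp_atTop.comp
    apply Tendsto.atTop_mul_atTop₀
    · exact (tendsto_natCast_atTop_atTop (R := ℝ)).atTop_div_const (by norm_num)
    · have h := Real.tendsto_log_atTop.comp (tendsto_natCast_atTop_atTop (R := ℝ))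
      exact tendsto_atTop_add_const_right _ (-(4 * Real.log 2)) h |>.congr
        (fun m => by simp only [Function.comp_apply]; ring)
  apply tendsto_atTop_mono' atTop _ hexp
  -- eventually m^(1-ω) ≥ 8
  have h8 : ∀ᶠ m : ℕ in atTop, (8:ℝ) ≤ (m : ℝ) ^ (1 - ω) := by
    have := (tendsto_rpow_atTop (by linarith : (0:ℝ) < 1 - ω)).comp
      (tendsto_natCast_atTop_atTop (R := ℝ))
    exact this.eventually_ge_atTop 8
  filter_upwards [h8, eventually_ge_atTop 4] with m h8m hm4
  have hm0 : (0:ℝ) < m := by positivity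
  have hm4' : (4:ℝ) ≤ m := by exact_mod_cast hm4
  -- m^ω ≤ m/8
  have hrpos : (0:ℝ) < (m:ℝ) ^ ω := Real.rpow_pos_of_pos hm0 ω
  have hsplit : (m:ℝ) ^ ω * (m:ℝ) ^ (1 - ω) = m := by
    rw [← Real.rpow_add hm0]; simp
  have hω8 : (m:ℝ) ^ ω ≤ m / 8 := by
    have : (m:ℝ) ^ ω * 8 ≤ (m:ℝ) ^ ω * (m:ℝ) ^ (1 - ω) := by
      exact mul_le_mul_of_nonneg_left h8m hrpos.le
    rw [hsplit] at this; linarith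
  set b : ℕ := ⌊(m : ℝ) ^ ω⌋₊ with hb
  have hbω : (b:ℝ) ≤ (m:ℝ) ^ ω := Nat.floor_le hrpos.le
  -- factorial lower bound : m! ≥ n^(m-n) with n = ⌈m/2⌉
  set n : ℕ := (m + 1) / 2 with hn
  have hnm : n ≤ m := by omega
  have hfac : (n:ℕ) ^ (m - n) ≤ m.factorial := by
    calc n ^ (m - n) ≤ n.factorial * n ^ (m - n) :=
          Nat.le_mul_of_pos_left _ n.factorial_pos
      _ ≤ m.factorial := Nat.factorial_mul_pow_sub_le_factorial hnm
  set j : ℕ := m - n with hj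
  have hn2 : (m:ℝ) / 2 ≤ n := by
    have : m ≤ 2 * n := by omega
    have : (m:ℝ) ≤ 2 * n := by exact_mod_cast this
    linarith
  have hj2 : ((m:ℝ) - 1) / 2 ≤ j := by
    have h : m - 1 ≤ 2 * j := by omega
    have h1 : (m:ℝ) - 1 ≤ 2 * (j:ℝ) := by
      have h2 := (Nat.cast_le (α := ℝ)).mpr h
      push_cast [Nat.cast_sub (by omega : 1 ≤ m)] at h2
      linarith
    linarith
  -- logs
  set L : ℝ := Real.log m with hL
  have hL0 : 0 ≤ L := Real.log_nonneg (by linarith)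
  have hcL : Real.log 2 ≤ L := Real.log_le_log (by norm_num) (by linarith)
  have hlog2 : Real.log ((m:ℝ) / 2) = L - Real.log 2 := by
    rw [hL, Real.log_div (by linarith) (by norm_num)]
  -- key: exp(E) ≤ m!/m^b  where E = j*(L - log 2) - b*L
  have hpowb : ((m:ℝ)) ^ b = Real.exp ((b:ℝ) * L) := by
    rw [Real.exp_nat_mul, hL, Real.exp_log hm0]
  have hpowj : Real.exp ((j:ℝ) * (L - Real.log 2)) ≤ (n:ℝ) ^ j := by
    rw [← hlog2, Real.exp_nat_mul, Real.exp_log (by linarith)]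
    exact pow_le_pow_left₀ (by linarith) hn2 j
  have hkey : Real.exp ((j:ℝ) * (L - Real.log 2) - (b:ℝ) * L)
      ≤ (m.factorial : ℝ) / (m:ℝ) ^ b := by
    rw [le_div_iff₀ (by positivity)]
    calc Real.exp ((j:ℝ) * (L - Real.log 2) - (b:ℝ) * L) * (m:ℝ) ^ b
        = Real.exp ((j:ℝ) * (L - Real.log 2)) := by
          rw [hpowb, ← Real.exp_add]
          congr 1
          ring
      _ ≤ (n:ℝ) ^ j := hpowj
      _ ≤ (m.factorial : ℝ) := by exact_mod_cast hfac
  refine le_trans (Real.exp_le_exp.mpr ?_) hkey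
  -- scalar inequality
  have hbm : (b:ℝ) ≤ (m:ℝ) / 8 := hbω.trans hω8
  have hb0 : (0:ℝ) ≤ b := Nat.cast_nonneg b
  nlinarith [mul_le_mul_of_nonneg_right hj2 (sub_nonneg.mpr hcL),
    mul_le_mul_of_nonneg_right hbm hL0,
    mul_nonneg hL0 (by linarith : (0:ℝ) ≤ (m:ℝ) - 4),
    mul_nonneg hc2 (by linarith : (0:ℝ) ≤ (m:ℝ) - 4)]
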